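/- Let G be finite, f : 2^G → ℝ monotone submodular with f(∅) = 0, and let X_t be the set built by the greedy algorithm that, for t = 1,…,s, adds an element maximizing the marginal gain f(X ∪ {j}) − f(X). Then for each t ≤ s, f(X_t) ≥ (1 − (1 − 1/s)^t) · max_{|S| ≤ s} f(S); in particular f(X_s) ≥ (1 − 1/e) · max_{|S| ≤ s} f(S). -/

import Mathlib

theorem greedy_cardinality_guarantee
    {G : Type*} [DecidableEq G] [Fintype G] (f : Finset G → ℝ)
    (hmono : ∀ A B : Finset G, A ⊆ B → f A ≤ f B)
    (hsub : ∀ A B : Finset G, f A + f B ≥ f (A ∪ B) + f (A ∩ B))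
    (hf0 : f ∅ = 0)
    (s : ℕ) (X : ℕ → Finset G) (hX0 : X 0 = ∅)
    (hgreedy : ∀ t < s, ∃ j : G, X (t + 1) = insert j (X t) ∧
      ∀ j' : G, f (insert j' (X t)) - f (X t) ≤ f (insert j (X t)) - f (X t)) :
    (∀ t ≤ s, ∀ S : Finset G, S.card ≤ s →
      (1 - (1 - 1 / (s : ℝ)) ^ t) * f S ≤ f (X t)) ∧
    (∀ S : Finset G, S.card ≤ s →
      (1 - 1 / Real.exp 1) * f S ≤ f (X s)) := by
  -- diminishing returns
  have hmarg : ∀ (a : G) (A B : Finset G), B ⊆ A →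
      f (insert a A) - f A ≤ f (insert a B) - f B := by
    intro a A B hBA
    by_cases ha : a ∈ A
    · rw [Finset.insert_eq_self.mpr ha]
      have := hmono B (insert a B) (Finset.subset_insert a B)
      linarith
    · have h := hsub (insert a B) A
      have h1 : insert a B ∪ A = insert a A := by
        rw [Finset.insert_union, Finset.union_eq_right.mpr hBA]
      have h2 : insert a B ∩ A = B := by
        ext x
        simp only [Finset.mem_inter, Finset.mem_insert]
        constructor
        · rintro ⟨(rfl | hx), hxA⟩
          · exact absurd hxA ha
          · exact hx
        · intro hx; exact ⟨Or.inr hx, hBA hx⟩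
      rw [h1, h2] at h
      linarith
  -- summation bound
  have hsum : ∀ (S A : Finset G),
      f (A ∪ S) ≤ f A + ∑ j ∈ S, (f (insert j A) - f A) := by
    intro S A
    induction S using Finset.induction_on with
    | empty => simp
    | insert a S ha ih =>
      rw [Finset.union_insert, Finset.sum_insert ha]
      have h1 := hmarg a (A ∪ S) A Finset.subset_union_left
      linarith
  have hkey : ∀ t ≤ s, ∀ S : Finset G, S.card ≤ s →
      (1 - (1 - 1 / (s : ℝ)) ^ t) * f S ≤ f (X t) := by
    intro t
    induction t with
    | zero => intro _ S _; simp [hX0, hf0]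
    | succ t ih =>
      intro ht S hS
      have ht' : t < s := ht
      obtain ⟨j, hXt1, hmax⟩ := hgreedy t ht'
      have hspos : (0 : ℝ) < s := by
        have : 0 < s := Nat.lt_of_le_of_lt (Nat.zero_le t) ht'
        exact_mod_cast this
      have hs1 : (1 : ℝ) ≤ s := by
        have : 1 ≤ s := Nat.lt_of_le_of_lt (Nat.zero_le t) ht'
        exact_mod_cast this
      set c : ℝ := 1 - 1 / (s : ℝ) with hc
      have hc0 : 0 ≤ c := by
        have : 1 / (s : ℝ) ≤ 1 := by rw [div_le_one hspos]; exact hs1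
        rw [hc]; linarith
      have hfS0 : 0 ≤ f S := by
        have := hmono ∅ S (Finset.empty_subset S); linarith [hf0 ▸ this]
      have hgnn : 0 ≤ f (X (t + 1)) - f (X t) := by
        rw [hXt1]
        have := hmono (X t) (insert j (X t)) (Finset.subset_insert j (X t))
        linarith
      -- gain bound: f S - f (X t) ≤ s * gain
      have hgain : f S - f (X t) ≤ (s : ℝ) * (f (X (t + 1)) - f (X t)) := by
        have hA : f S ≤ f (X t ∪ S) := hmono _ _ Finset.subset_union_right
        have hB := hsum S (X t)
        have hterm : ∀ j' ∈ S,
            f (insert j' (X t)) - f (X t) ≤ f (X (t + 1)) - f (X t) := by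
          intro j' _; rw [hXt1]; exact hmax j'
        have hsumle : ∑ j' ∈ S, (f (insert j' (X t)) - f (X t)) ≤
            (S.card : ℝ) * (f (X (t + 1)) - f (X t)) := by
          have := Finset.sum_le_card_nsmul S _ _ hterm
          simpa [nsmul_eq_mul] using this
        have hcard : (S.card : ℝ) ≤ s := by exact_mod_cast hS
        have := mul_le_mul_of_nonneg_right hcard hgnn
        linarith
      have ih' := ih (le_of_lt ht') S hS
      rw [sub_mul, one_mul] at ih'
      have h1 : f S - f (X t) ≤ c ^ t * f S := by linarith
      have hsc : (s : ℝ) * c = s - 1 := by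
        rw [hc]; field_simp
      have h2 : f S - f (X (t + 1)) ≤ c * (f S - f (X t)) := by
        have h2' : (s : ℝ) * (f S - f (X (t + 1))) ≤
            (s : ℝ) * (c * (f S - f (X t))) := by
          rw [← mul_assoc, hsc]; nlinarith [hgain]
        exact le_of_mul_le_mul_left h2' hspos
      have h3 : c * (f S - f (X t)) ≤ c * (c ^ t * f S) :=
        mul_le_mul_of_nonneg_left h1 hc0
      have h4 : c * (c ^ t * f S) = c ^ (t + 1) * f S := by ring
      rw [sub_mul, one_mul]
      linarith
  refine ⟨hkey, ?_⟩
  intro S hS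
  rcases Nat.eq_zero_or_pos s with rfl | hsp
  · have hSe : S = ∅ := Finset.card_eq_zero.mp (Nat.le_zero.mp hS)
    simp [hSe, hf0, hX0]
  · have hspos : (0 : ℝ) < s := by exact_mod_cast hsp
    have hs1 : (1 : ℝ) ≤ s := by exact_mod_cast hsp
    have hfS0 : 0 ≤ f S := by
      have := hmono ∅ S (Finset.empty_subset S); linarith [hf0 ▸ this]
    have hc0 : 0 ≤ 1 - 1 / (s : ℝ) := by
      have : 1 / (s : ℝ) ≤ 1 := by rw [div_le_one hspos]; exact hs1
      linarith
    have hexp : (1 - 1 / (s : ℝ)) ^ s ≤ 1 / Real.exp 1 := by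
      have h1 : 1 - 1 / (s : ℝ) ≤ Real.exp (-(1 / (s : ℝ))) := by
        have := Real.add_one_le_exp (-(1 / (s : ℝ)))
        linarith
      calc (1 - 1 / (s : ℝ)) ^ s ≤ Real.exp (-(1 / (s : ℝ))) ^ s :=
            pow_le_pow_left₀ hc0 h1 s
        _ = Real.exp ((s : ℝ) * (-(1 / (s : ℝ)))) := by
            rw [← Real.exp_nat_mul]
        _ = Real.exp (-1) := by
            congr 1; field_simp
        _ = 1 / Real.exp 1 := by rw [Real.exp_neg, one_div]
    have hkey' := hkey s le_rfl S hS
    have := mul_le_mul_of_nonneg_right (by linarith : (1 : ℝ) - 1 / Real.exp 1 ≤ 1 - (1 - 1 / (s : ℝ)) ^ s) hfS0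
    linarith
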